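/- Let n ≥ 1, c > 0, L > 0 and 0 < ρ < 1. Let u be a strong solution of ∂_t u − Δu = χ_{u>0} on Q_1 such that u(x,t₂) − u(x,t₁) ≥ c(t₂ − t₁) whenever (x,t₁), (x,t₂) ∈ Q_1 with t₁ ≤ t₂, and |∇u| ≤ L on Q_ρ. Then any two free boundary points (x,t), (y,s) ∈ Γ ∩ Q_ρ satisfy |t − s| ≤ (L/c)|x − y|. Consequently, Γ ∩ Q_ρ is the graph over the spatial variable of an (L/c)-Lipschitz function: there exists H, defined on the projection of Γ ∩ Q_ρ to ℝⁿ, with |H(x) − H(y)| ≤ (L/c)|x − y| and Γ ∩ Q_ρ = {(x, H(x)) : x in the domain of H}. -/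
import Mathlib

open MeasureTheory Metric Set Filter

noncomputable section

abbrev Spc (n : ℕ) := EuclideanSpace ℝ (Fin n)

/-- Parabolic cylinder `Q_r(x,t)`. -/
def Qcyl (n : ℕ) (r : ℝ) (x : Spc n) (t : ℝ) : Set (Spc n × ℝ) :=
  {p : Spc n × ℝ | ‖p.1 - x‖ + Real.sqrt |p.2 - t| < r}

/-- Time derivative `∂ₜ u`. -/
def timeDeriv {n : ℕ} (u : Spc n × ℝ → ℝ) (p : Spc n × ℝ) : ℝ :=
  deriv (fun s => u (p.1, s)) p.2

/-- Spatial gradient `∇u`. -/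
def spGrad {n : ℕ} (u : Spc n × ℝ → ℝ) (p : Spc n × ℝ) : Spc n :=
  gradient (fun y => u (y, p.2)) p.1

/-- The point `p` translated by `h` in the `i`-th spatial direction. -/
def dirPoint {n : ℕ} (p : Spc n × ℝ) (i : Fin n) (h : ℝ) : Spc n × ℝ :=
  (p.1 + h • EuclideanSpace.single i (1 : ℝ), p.2)

/-- Second spatial partial `∂ᵢⱼ u`, as derivative of the `i`-th component of
the spatial gradient in direction `j`. -/
def secondPartial {n : ℕ} (u : Spc n × ℝ → ℝ) (i j : Fin n) (p : Spc n × ℝ) : ℝ :=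
  deriv (fun h : ℝ => spGrad u (dirPoint p j h) i) 0

/-- Spatial Laplacian `Δu`. -/
def lapl {n : ℕ} (u : Spc n × ℝ → ℝ) (p : Spc n × ℝ) : ℝ :=
  ∑ i, secondPartial u i i p

/-- `u` is a strong solution of `∂ₜ u - Δu = g · χ_{u>0}` on `U`:
continuous with continuous spatial gradient, and a.e. on `U` the time derivative and
the pure second spatial partials exist and the equation holds. -/
def IsStrongSolution {n : ℕ} (u : Spc n × ℝ → ℝ) (g : ℝ) (U : Set (Spc n × ℝ)) : Prop :=
  ContinuousOn u U ∧
  (∀ p ∈ U, HasGradientAt (fun y => u (y, p.2)) (spGrad u p) p.1) ∧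
  ContinuousOn (fun p => spGrad u p) U ∧
  (∀ᵐ p ∂(volume.restrict U),
    HasDerivAt (fun s => u (p.1, s)) (timeDeriv u p) p.2 ∧
    (∀ i : Fin n, HasDerivAt (fun h : ℝ => spGrad u (dirPoint p i h) i) (secondPartial u i i p) 0) ∧
    timeDeriv u p - lapl u p = (if 0 < u p then g else 0))

/-- The free boundary `Γ = ∂{u>0}` relative to the open set `U`. -/
def freeBdry {n : ℕ} (u : Spc n × ℝ → ℝ) (U : Set (Spc n × ℝ)) : Set (Spc n × ℝ) :=
  U ∩ frontier {p : Spc n × ℝ | 0 < u p}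

lemma qcyl_open (n : ℕ) (r : ℝ) (x : Spc n) (t : ℝ) : IsOpen (Qcyl n r x t) := by
  have : Continuous fun p : Spc n × ℝ => ‖p.1 - x‖ + Real.sqrt |p.2 - t| := by fun_prop
  exact isOpen_lt this continuous_const

lemma mem_qcyl {n : ℕ} {r : ℝ} {z : Spc n} {τ : ℝ} :
    (z, τ) ∈ Qcyl n r 0 0 ↔ ‖z‖ + Real.sqrt |τ| < r := by
  simp [Qcyl]

/-- `u` vanishes on the free boundary. -/
lemma fb_u_eq_zero {n : ℕ} {u : Spc n × ℝ → ℝ} {U : Set (Spc n × ℝ)} (hU : IsOpen U)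
    (hu : ContinuousOn u U) {p : Spc n × ℝ} (hp : p ∈ freeBdry u U) : u p = 0 := by
  obtain ⟨hpU, hpf⟩ := hp
  have hcont : ContinuousAt u p := hu.continuousAt (hU.mem_nhds hpU)
  rcases lt_trichotomy (u p) 0 with h | h | h
  · exfalso
    have h1 : p ∈ closure {q : Spc n × ℝ | 0 < u q} :=
      (frontier_subset_closure hpf)
    have h2 : u ⁻¹' (Set.Iio 0) ∈ nhds p := hcont.preimage_mem_nhds (Iio_mem_nhds h)
    rcases mem_closure_iff_nhds.mp h1 _ h2 with ⟨q, hq1, hq2⟩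
    simp only [Set.mem_preimage, Set.mem_Iio] at hq1
    simp only [Set.mem_setOf_eq] at hq2
    linarith
  · exact h
  · exfalso
    have h2 : u ⁻¹' (Set.Ioi 0) ∈ nhds p := hcont.preimage_mem_nhds (Ioi_mem_nhds h)
    have h3 : p ∈ interior {q : Spc n × ℝ | 0 < u q} := by
      rw [mem_interior_iff_mem_nhds]
      exact Filter.mem_of_superset h2 (fun q hq => hq)
    rw [← closure_diff_interior] at hpf
    exact hpf.2 h3

/-- One-sided key estimate. -/
lemma key_est {n : ℕ} {c L ρ : ℝ} (hc : 0 < c) (hρ1 : ρ < 1) {u : Spc n × ℝ → ℝ}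
    (hgr : ∀ p ∈ Qcyl n 1 0 0, HasGradientAt (fun y => u (y, p.2)) (spGrad u p) p.1)
    (hmono : ∀ (x : Spc n) (t₁ t₂ : ℝ), (x, t₁) ∈ Qcyl n 1 0 0 → (x, t₂) ∈ Qcyl n 1 0 0 →
      t₁ ≤ t₂ → c * (t₂ - t₁) ≤ u (x, t₂) - u (x, t₁))
    (hgradbd : ∀ p ∈ Qcyl n ρ 0 0, ‖spGrad u p‖ ≤ L)
    (x y : Spc n) (t s : ℝ) (hst : s ≤ t)
    (hp : (x, t) ∈ Qcyl n ρ 0 0) (hq : (y, s) ∈ Qcyl n ρ 0 0)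
    (hup : u (x, t) = 0) (huq : u (y, s) = 0) :
    c * (t - s) ≤ L * ‖x - y‖ := by
  rw [mem_qcyl] at hp hq
  set s' := max s (min t 0) with hs'def
  have hss' : s ≤ s' := le_max_left _ _
  have hs't : s' ≤ t := max_le hst (min_le_left _ _)
  have habs : |s'| ≤ |t| ∧ |s'| ≤ |s| := by
    rcases le_total t 0 with h | h
    · have e : s' = t := by rw [hs'def, min_eq_left h, max_eq_right hst]
      refine ⟨le_of_eq (by rw [e]), ?_⟩
      rw [e, abs_of_nonpos h, abs_of_nonpos (hst.trans h)]
      linarith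
    · have e : s' = max s 0 := by rw [hs'def, min_eq_right h]
      rcases le_total s 0 with h2 | h2
      · have e2 : s' = 0 := by rw [e, max_eq_right h2]
        simp [e2]
      · have e2 : s' = s := by rw [e, max_eq_left h2]
        refine ⟨?_, le_of_eq (by rw [e2])⟩
        rw [e2, abs_of_nonneg h2, abs_of_nonneg h]
        linarith
  have hsq_t : Real.sqrt |s'| ≤ Real.sqrt |t| := Real.sqrt_le_sqrt habs.1
  have hsq_s : Real.sqrt |s'| ≤ Real.sqrt |s| := Real.sqrt_le_sqrt habs.2
  -- memberships
  have hxs' : ‖x‖ + Real.sqrt |s'| < ρ := by linarith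
  have hys' : ‖y‖ + Real.sqrt |s'| < ρ := by linarith
  -- mean value estimate at time s'
  have hball : ∀ z : Spc n, z ∈ ball (0 : Spc n) (ρ - Real.sqrt |s'|) →
      (z, s') ∈ Qcyl n ρ 0 0 := by
    intro z hz
    rw [mem_ball, dist_zero_right] at hz
    rw [mem_qcyl]
    linarith
  have hsubset : Qcyl n ρ 0 0 ⊆ Qcyl n 1 0 0 := by
    intro p hp'
    simp only [Qcyl, Set.mem_setOf_eq] at hp' ⊢
    linarith
  have hx : x ∈ ball (0 : Spc n) (ρ - Real.sqrt |s'|) := by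
    rw [mem_ball, dist_zero_right]; linarith
  have hy : y ∈ ball (0 : Spc n) (ρ - Real.sqrt |s'|) := by
    rw [mem_ball, dist_zero_right]; linarith
  have hmvt : ‖u (y, s') - u (x, s')‖ ≤ L * ‖y - x‖ := by
    refine Convex.norm_image_sub_le_of_norm_hasFDerivWithin_le
      (f := fun z : Spc n => u (z, s'))
      (f' := fun z => InnerProductSpace.toDual ℝ (Spc n) (spGrad u (z, s')))
      (fun z hz => ((hgr (z, s') (hsubset (hball z hz))).hasFDerivAt).hasFDerivWithinAt)
      (fun z hz => ?_) (convex_ball 0 _) hx hy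
    rw [LinearIsometryEquiv.norm_map]
    exact hgradbd _ (hball z hz)
  have hm1 : c * (s' - s) ≤ u (y, s') - u (y, s) :=
    hmono y s s' (hsubset (mem_qcyl.mpr hq)) (hsubset (mem_qcyl.mpr hys')) hss'
  have hm2 : c * (t - s') ≤ u (x, t) - u (x, s') :=
    hmono x s' t (hsubset (mem_qcyl.mpr hxs')) (hsubset (mem_qcyl.mpr hp)) hs't
  rw [Real.norm_eq_abs] at hmvt
  have habs2 := abs_le.mp hmvt
  have hnorm : ‖y - x‖ = ‖x - y‖ := norm_sub_rev _ _
  rw [hnorm] at habs2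
  linarith [habs2.1, habs2.2]

theorem stmt7 (n : ℕ) (hn : 1 ≤ n) (c L ρ : ℝ) (hc : 0 < c) (hL : 0 < L)
    (hρ0 : 0 < ρ) (hρ1 : ρ < 1) (u : Spc n × ℝ → ℝ)
    (hsol : IsStrongSolution u 1 (Qcyl n 1 0 0))
    (hmono : ∀ (x : Spc n) (t₁ t₂ : ℝ), (x, t₁) ∈ Qcyl n 1 0 0 → (x, t₂) ∈ Qcyl n 1 0 0 →
      t₁ ≤ t₂ → c * (t₂ - t₁) ≤ u (x, t₂) - u (x, t₁))
    (hgradbd : ∀ p ∈ Qcyl n ρ 0 0, ‖spGrad u p‖ ≤ L) :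
    (∀ p q : Spc n × ℝ, p ∈ freeBdry u (Qcyl n 1 0 0) ∩ Qcyl n ρ 0 0 →
      q ∈ freeBdry u (Qcyl n 1 0 0) ∩ Qcyl n ρ 0 0 →
      |p.2 - q.2| ≤ (L / c) * ‖p.1 - q.1‖) ∧
    ∃ H : Spc n → ℝ,
      (∀ p ∈ freeBdry u (Qcyl n 1 0 0) ∩ Qcyl n ρ 0 0, p.2 = H p.1) ∧
      (∀ p q : Spc n × ℝ, p ∈ freeBdry u (Qcyl n 1 0 0) ∩ Qcyl n ρ 0 0 →
        q ∈ freeBdry u (Qcyl n 1 0 0) ∩ Qcyl n ρ 0 0 →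
        |H p.1 - H q.1| ≤ (L / c) * ‖p.1 - q.1‖) ∧
      freeBdry u (Qcyl n 1 0 0) ∩ Qcyl n ρ 0 0 =
        {p : Spc n × ℝ |
          p.1 ∈ Prod.fst '' (freeBdry u (Qcyl n 1 0 0) ∩ Qcyl n ρ 0 0) ∧ p.2 = H p.1} := by
  set S := freeBdry u (Qcyl n 1 0 0) ∩ Qcyl n ρ 0 0 with hSdef
  have hzero : ∀ p ∈ S, u p = 0 := fun p hp =>
    fb_u_eq_zero (qcyl_open n 1 0 0) hsol.1 hp.1
  have key2 : ∀ p q : Spc n × ℝ, p ∈ S → q ∈ S → |p.2 - q.2| ≤ (L / c) * ‖p.1 - q.1‖ := by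
    intro p q hp hq
    have hL2 : ∀ a b : Spc n × ℝ, a ∈ S → b ∈ S → b.2 ≤ a.2 →
        c * (a.2 - b.2) ≤ L * ‖a.1 - b.1‖ := by
      intro a b ha hb hba
      have := key_est hc hρ1 hsol.2.1 hmono hgradbd a.1 b.1 a.2 b.2 hba
        (by rw [Prod.mk.eta]; exact ha.2) (by rw [Prod.mk.eta]; exact hb.2)
        (by rw [Prod.mk.eta]; exact hzero a ha) (by rw [Prod.mk.eta]; exact hzero b hb)
      exact this
    rw [div_mul_eq_mul_div, le_div_iff₀ hc]
    rcases le_total q.2 p.2 with h | h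
    · have h1 := hL2 p q hp hq h
      rw [abs_of_nonneg (sub_nonneg.mpr h)]
      nlinarith
    · have h1 := hL2 q p hq hp h
      rw [abs_of_nonpos (sub_nonpos.mpr h), norm_sub_rev]
      nlinarith
  refine ⟨key2, ?_⟩
  classical
  have hgraph : ∀ p ∈ S, p.2 = (fun x : Spc n =>
      if h : ∃ t, (x, t) ∈ S then h.choose else 0) p.1 := by
    intro p hp
    have hex : ∃ t, (p.1, t) ∈ S := ⟨p.2, by rwa [Prod.mk.eta]⟩
    have hdite : (if h : ∃ t, (p.1, t) ∈ S then h.choose else 0) = hex.choose :=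
      dif_pos hex
    have h1 := key2 p (p.1, hex.choose) hp hex.choose_spec
    have h2 : |p.2 - hex.choose| ≤ 0 := by simpa using h1
    have h3 : p.2 - hex.choose = 0 := abs_nonpos_iff.mp h2
    show p.2 = if h : ∃ t, (p.1, t) ∈ S then h.choose else 0
    rw [hdite]
    linarith
  refine ⟨fun x => if h : ∃ t, (x, t) ∈ S then h.choose else 0, hgraph, ?_, ?_⟩
  · intro p q hp hq
    have e1 := hgraph p hp
    have e2 := hgraph q hq
    simp only at e1 e2
    have h := key2 p q hp hq
    rw [e1, e2] at h
    exact h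
  · ext p
    simp only [Set.mem_setOf_eq]
    constructor
    · intro hp
      exact ⟨⟨p, hp, rfl⟩, hgraph p hp⟩
    · rintro ⟨⟨q, hq, hq1⟩, hp2⟩
      have e2 := hgraph q hq
      simp only at e2 hp2
      have hq2 : q.2 = p.2 := by rw [e2, hq1, ← hp2]
      have heq : q = p := Prod.ext hq1 hq2
      exact heq ▸ hq
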